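/- Let C ⊆ ℝ^N be a closed convex cone and let A ∈ M_N(ℝ) be quasi-positive with respect to C and such that every complex eigenvalue of A has negative real part. Then A is invertible, −A^{−1} = ∫_0^∞ exp(sA) ds, and −A^{−1} maps C into C, i.e. −A^{−1} ∈ π(C). -/

import Mathlib

open Matrix MeasureTheory

noncomputable section

section Local
attribute [local instance] Matrix.linftyOpNormedRing Matrix.linftyOpNormedAlgebra
variable {n : ℕ}

instance : CompleteSpace (Matrix (Fin n) (Fin n) ℂ) := FiniteDimensional.complete ℝ _

lemma mulVec_exp_eigen (M : Matrix (Fin n) (Fin n) ℂ) {μ : ℂ} {v : Fin n → ℂ}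
    (hv : M.mulVec v = μ • v) :
    (NormedSpace.exp M).mulVec v = Complex.exp μ • v := by
  have hpow : ∀ k : ℕ, (M ^ k).mulVec v = μ ^ k • v := by
    intro k
    induction k with
    | zero => simp
    | succ k ih =>
      rw [pow_succ', pow_succ', ← Matrix.mulVec_mulVec, ih, Matrix.mulVec_smul, hv,
        smul_smul, mul_comm]
  let T : Matrix (Fin n) (Fin n) ℂ →L[ℂ] (Fin n → ℂ) :=
    LinearMap.toContinuousLinearMap
      { toFun := fun X => X.mulVec v
        map_add' := fun X Y => Matrix.add_mulVec X Y v
        map_smul' := fun c X => Matrix.smul_mulVec c X v }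
  have hT : ∀ X : Matrix (Fin n) (Fin n) ℂ, T X = X.mulVec v := fun _ => rfl
  have hsum : HasSum (fun k : ℕ => ((k.factorial : ℂ)⁻¹ • M ^ k)) (NormedSpace.exp M) :=
    NormedSpace.exp_series_hasSum_exp' M
  have h2 : HasSum (fun k : ℕ => ((k.factorial : ℂ)⁻¹ * μ ^ k) • v)
      ((NormedSpace.exp M).mulVec v) := by
    have := T.hasSum hsum
    simpa only [hT, Matrix.smul_mulVec, hpow, smul_smul] using this
  have h3 : HasSum (fun k : ℕ => ((k.factorial : ℂ)⁻¹ * μ ^ k) • v) (Complex.exp μ • v) := by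
    have hs : HasSum (fun k : ℕ => ((k.factorial : ℂ)⁻¹ * μ ^ k)) (Complex.exp μ) := by
      have := NormedSpace.exp_series_hasSum_exp' (𝕂 := ℂ) μ
      simpa [smul_eq_mul, ← Complex.exp_eq_exp_ℂ] using this
    exact hs.smul_const v
  exact h2.unique h3

end Local

section Local2
attribute [local instance] Matrix.linftyOpNormedRing Matrix.linftyOpNormedAlgebra
variable {n : ℕ}

set_option maxHeartbeats 1000000 in
open Module.End in
lemma spectrum_exp_subset (M : Matrix (Fin n) (Fin n) ℂ) :
    spectrum ℂ (NormedSpace.exp M) ⊆ Complex.exp '' spectrum ℂ M := by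
  intro lam hlam
  have e := Matrix.toLinAlgEquiv' (R := ℂ) (n := Fin n)
  rw [← AlgEquiv.spectrum_eq (Matrix.toLinAlgEquiv' (R := ℂ) (n := Fin n)),
    ← Module.End.hasEigenvalue_iff_mem_spectrum] at hlam
  set f : Module.End ℂ (Fin n → ℂ) := Matrix.toLinAlgEquiv' (NormedSpace.exp M)
  set g : Module.End ℂ (Fin n → ℂ) := Matrix.toLinAlgEquiv' M
  have hfg : ∀ x, f x = (NormedSpace.exp M).mulVec x := fun _ => rfl
  have hgg : ∀ x, g x = M.mulVec x := fun _ => rfl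
  set W : Submodule ℂ (Fin n → ℂ) := eigenspace f lam with hW
  have hWne : W ≠ ⊥ := hlam
  haveI : Nontrivial W := Submodule.nontrivial_iff_ne_bot.mpr hWne
  have hcomm : M * NormedSpace.exp M = NormedSpace.exp M * M :=
    ((Commute.refl M).exp_right).eq
  have hinv : ∀ x ∈ W, g x ∈ W := by
    intro x hx
    rw [hW, mem_eigenspace_iff] at hx ⊢
    rw [hfg, hgg, Matrix.mulVec_mulVec, ← hcomm, ← Matrix.mulVec_mulVec, ← hfg, hx,
      Matrix.mulVec_smul]
  obtain ⟨μ, hμ⟩ := Module.End.exists_eigenvalue (g.restrict hinv)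
  obtain ⟨w, hw⟩ := hμ.exists_hasEigenvector
  have hv : M.mulVec (w : Fin n → ℂ) = μ • (w : Fin n → ℂ) := by
    have := hw.apply_eq_smul
    have h2 := congrArg (Subtype.val) this
    rw [LinearMap.restrict_coe_apply] at h2
    simpa [hgg] using h2
  have hvne : (w : Fin n → ℂ) ≠ 0 := by
    simpa [Submodule.coe_eq_zero] using hw.2
  have hμmem : μ ∈ spectrum ℂ M := by
    rw [← AlgEquiv.spectrum_eq (Matrix.toLinAlgEquiv' (R := ℂ) (n := Fin n)),
      ← Module.End.hasEigenvalue_iff_mem_spectrum]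
    exact hasEigenvalue_of_hasEigenvector ⟨mem_eigenspace_iff.mpr (by rw [hgg]; exact hv), hvne⟩
  have h1 : (NormedSpace.exp M).mulVec (w : Fin n → ℂ) = Complex.exp μ • (w : Fin n → ℂ) :=
    mulVec_exp_eigen M hv
  have h2 : (NormedSpace.exp M).mulVec (w : Fin n → ℂ) = lam • (w : Fin n → ℂ) := by
    have h2' : f (w : Fin n → ℂ) = lam • (w : Fin n → ℂ) := mem_eigenspace_iff.mp w.2
    rw [hfg] at h2'; exact h2'
  refine ⟨μ, hμmem, ?_⟩
  have : (Complex.exp μ - lam) • (w : Fin n → ℂ) = 0 := by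
    rw [sub_smul, ← h1, ← h2, sub_self]
  rcases smul_eq_zero.mp this with h | h
  · exact (sub_eq_zero.mp h)
  · exact absurd h hvne

end Local2

section Local3
attribute [local instance] Matrix.linftyOpNormedRing Matrix.linftyOpNormedAlgebra
open scoped ENNReal NNReal
variable {n : ℕ}

attribute [local instance] Matrix.linftyOpSeminormedAddCommGroup in
lemma norm_entry_le_linfty {α : Type*} [SeminormedAddCommGroup α]
    (M : Matrix (Fin n) (Fin n) α) (i j : Fin n) : ‖M i j‖ ≤ ‖M‖ := by
  have h1 : ‖M i j‖₊ ≤ ∑ k, ‖M i k‖₊ :=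
    Finset.single_le_sum (f := fun k => ‖M i k‖₊) (fun _ _ => zero_le) (Finset.mem_univ j)
  have h2 : (∑ k, ‖M i k‖₊) ≤ (Finset.univ : Finset (Fin n)).sup fun i => ∑ k, ‖M i k‖₊ :=
    Finset.le_sup (f := fun i => ∑ k, ‖M i k‖₊) (Finset.mem_univ i)
  have := h1.trans h2
  rw [← Matrix.linfty_opNNNorm_def] at this
  exact_mod_cast this

set_option maxHeartbeats 1000000 in
lemma exp_decay_complex (M : Matrix (Fin n) (Fin n) ℂ)
    (h : ∀ μ ∈ spectrum ℂ M, μ.re < 0) :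
    ∃ c K : ℝ, 0 < c ∧ 0 < K ∧ ∀ s : ℝ, 0 ≤ s → ∀ i j : Fin n,
      ‖NormedSpace.exp (s • M) i j‖ ≤ K * Real.exp (-c * s) := by
  rcases Nat.eq_zero_or_pos n with hn | hn
  · subst hn; exact ⟨1, 1, one_pos, one_pos, fun s _ i _ => i.elim0⟩
  haveI : Nonempty (Fin n) := ⟨⟨0, hn⟩⟩
  haveI : Nontrivial (Matrix (Fin n) (Fin n) ℂ) :=
    ⟨1, 0, fun hyp => one_ne_zero (α := ℂ) (by
      have := congrFun (congrFun hyp ⟨0, hn⟩) ⟨0, hn⟩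
      simpa [Matrix.one_apply_eq] using this)⟩
  have hne : (spectrum ℂ M).Nonempty := spectrum.nonempty M
  have hcpt : IsCompact (spectrum ℂ M) := spectrum.isCompact M
  obtain ⟨μ₀, hμ₀, hmax⟩ := hcpt.exists_isMaxOn hne Complex.continuous_re.continuousOn
  have ha : μ₀.re < 0 := h μ₀ hμ₀
  set r : ℝ := Real.exp μ₀.re with hr
  have hr0 : 0 < r := Real.exp_pos _
  have hr1 : r < 1 := Real.exp_lt_one_iff.mpr ha
  set r' : ℝ := (r + 1) / 2 with hr'
  have hr'0 : 0 < r' := by positivity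
  have hrr' : r < r' := by rw [hr']; linarith
  have hr'1 : r' < 1 := by rw [hr']; linarith
  set E := NormedSpace.exp M with hE
  have hspecE : ∀ z ∈ spectrum ℂ E, ‖z‖ < r' := by
    intro z hz
    obtain ⟨μ, hμ, rfl⟩ := spectrum_exp_subset M hz
    have : ‖Complex.exp μ‖ = Real.exp μ.re := Complex.norm_exp μ
    rw [this]
    exact lt_of_le_of_lt (Real.exp_le_exp.mpr (hmax hμ)) hrr'
  have hsr : spectralRadius ℂ E < (r'.toNNReal : ℝ≥0∞) := by
    refine spectrum.spectralRadius_lt_of_forall_lt_of_nonempty (spectrum.nonempty E) ?_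
    intro k hk
    exact Real.lt_toNNReal_iff_coe_lt.mpr (hspecE k hk)
  have gel := spectrum.pow_nnnorm_pow_one_div_tendsto_nhds_spectralRadius E
  obtain ⟨n₀, hn₀⟩ := Filter.eventually_atTop.mp (gel.eventually_lt_const hsr)
  set m₀ := max n₀ 1 with hm₀
  have hgeo : ∀ N : ℕ, m₀ ≤ N → ‖E ^ N‖ ≤ r' ^ N := by
    intro N hN
    have h1 := hn₀ N (le_trans (le_max_left _ _) hN)
    have hN1 : (1:ℕ) ≤ N := le_trans (le_max_right _ _) hN
    have hNne : ((N:ℝ)) ≠ 0 := by exact_mod_cast Nat.one_le_iff_ne_zero.mp hN1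
    have hx : ((‖E ^ N‖₊ : ℝ≥0∞) ^ (1 / (N:ℝ))) ^ (N:ℝ) = (‖E ^ N‖₊ : ℝ≥0∞) := by
      rw [← ENNReal.rpow_mul, one_div, inv_mul_cancel₀ hNne, ENNReal.rpow_one]
    have h2 : (‖E ^ N‖₊ : ℝ≥0∞) ≤ ((r'.toNNReal ^ N : ℝ≥0) : ℝ≥0∞) := by
      calc (‖E ^ N‖₊ : ℝ≥0∞) = ((‖E ^ N‖₊ : ℝ≥0∞) ^ (1 / (N:ℝ))) ^ (N:ℝ) := hx.symm
        _ ≤ ((r'.toNNReal : ℝ≥0∞)) ^ (N:ℝ) := ENNReal.rpow_le_rpow h1.le (Nat.cast_nonneg N)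
        _ = ((r'.toNNReal ^ N : ℝ≥0) : ℝ≥0∞) := by
            rw [ENNReal.rpow_natCast, ENNReal.coe_pow]
    have h3 : ‖E ^ N‖₊ ≤ r'.toNNReal ^ N := ENNReal.coe_le_coe.mp h2
    calc ‖E ^ N‖ = ((‖E ^ N‖₊ : ℝ≥0) : ℝ) := rfl
      _ ≤ ((r'.toNNReal ^ N : ℝ≥0) : ℝ) := by exact_mod_cast h3
      _ = r' ^ N := by
          push_cast
          rw [Real.coe_toNNReal _ hr'0.le]
  -- constant covering small powers
  obtain ⟨C₁, hC₁one, hpowbound⟩ : ∃ C₁ : ℝ, 1 ≤ C₁ ∧ ∀ N : ℕ, ‖E ^ N‖ ≤ C₁ * r' ^ N := by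
    have hSnn : (0:ℝ) ≤ ∑ k ∈ Finset.range m₀, ‖E ^ k‖ / r' ^ k :=
      Finset.sum_nonneg fun k _ => by positivity
    refine ⟨(∑ k ∈ Finset.range m₀, ‖E ^ k‖ / r' ^ k) + 1, by linarith, ?_⟩
    intro N
    rcases lt_or_ge N m₀ with hN | hN
    · have hterm : ‖E ^ N‖ / r' ^ N ≤ ∑ k ∈ Finset.range m₀, ‖E ^ k‖ / r' ^ k :=
        Finset.single_le_sum (f := fun k => ‖E ^ k‖ / r' ^ k)
          (fun k _ => by positivity) (Finset.mem_range.mpr hN)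
      have hrpow : (0:ℝ) < r' ^ N := by positivity
      calc ‖E ^ N‖ = ‖E ^ N‖ / r' ^ N * r' ^ N := by field_simp
        _ ≤ ((∑ k ∈ Finset.range m₀, ‖E ^ k‖ / r' ^ k) + 1) * r' ^ N := by
            apply mul_le_mul_of_nonneg_right _ hrpow.le
            linarith
    · calc ‖E ^ N‖ ≤ r' ^ N := hgeo N hN
        _ ≤ ((∑ k ∈ Finset.range m₀, ‖E ^ k‖ / r' ^ k) + 1) * r' ^ N := by
            nlinarith [pow_pos hr'0 N]
  have hC₁pos : (0:ℝ) < C₁ := lt_of_lt_of_le one_pos hC₁one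
  -- bound on exp(u • M) for u ∈ [0,1]
  have hcont : Continuous fun u : ℝ => ‖NormedSpace.exp (u • M)‖ :=
    (NormedSpace.exp_continuous.comp (continuous_id.smul continuous_const)).norm
  obtain ⟨u₀, _, hu₀⟩ := isCompact_Icc.exists_isMaxOn (Set.nonempty_Icc.mpr zero_le_one)
    hcont.continuousOn
  set K₀ : ℝ := ‖NormedSpace.exp (u₀ • M)‖ with hK₀
  have hK₀one : (1:ℝ) ≤ K₀ := by
    have h0 := hu₀ (Set.left_mem_Icc.mpr zero_le_one)
    simpa [NormedSpace.exp_zero] using h0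
  have hK₀pos : 0 < K₀ := lt_of_lt_of_le one_pos hK₀one
  -- assemble
  set c : ℝ := -Real.log r' with hc
  have hcpos : 0 < c := by
    rw [hc]
    have := Real.log_neg hr'0 hr'1
    linarith
  refine ⟨c, C₁ * K₀ * Real.exp c, hcpos,
    mul_pos (mul_pos hC₁pos hK₀pos) (Real.exp_pos c), ?_⟩
  intro s hs i j
  set N := ⌊s⌋₊ with hN
  have hfl : (N:ℝ) ≤ s := Nat.floor_le hs
  have hfl2 : s < (N:ℝ) + 1 := Nat.lt_floor_add_one s
  have hu : 0 ≤ s - (N:ℝ) := by linarith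
  have hu1 : s - (N:ℝ) ≤ 1 := by linarith
  have hsplit : NormedSpace.exp (s • M) = E ^ N * NormedSpace.exp ((s - (N:ℝ)) • M) := by
    have hdecomp : s • M = (N:ℝ) • M + (s - (N:ℝ)) • M := by
      rw [← add_smul]; ring_nf
    have hcomm : Commute ((N:ℝ) • M) ((s - (N:ℝ)) • M) :=
      ((Commute.refl M).smul_left _).smul_right _
    rw [hdecomp, Matrix.exp_add_of_commute _ _ hcomm]
    congr 1
    rw [← Matrix.exp_nsmul, Nat.cast_smul_eq_nsmul]
  have hbound : ‖NormedSpace.exp (s • M)‖ ≤ C₁ * r' ^ N * K₀ := by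
    rw [hsplit]
    calc ‖E ^ N * NormedSpace.exp ((s - (N:ℝ)) • M)‖
        ≤ ‖E ^ N‖ * ‖NormedSpace.exp ((s - (N:ℝ)) • M)‖ := norm_mul_le _ _
      _ ≤ (C₁ * r' ^ N) * K₀ := by
          apply mul_le_mul (hpowbound N) (hu₀ ⟨hu, hu1⟩) (norm_nonneg _) (by positivity)
  have hrN : r' ^ N ≤ Real.exp c * Real.exp (-c * s) := by
    have h1 : r' ^ N = r' ^ ((N:ℝ) : ℝ) := by
      rw [Real.rpow_natCast]
    have h2 : r' ^ ((N:ℝ)) ≤ r' ^ (s - 1) :=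
      Real.rpow_le_rpow_of_exponent_ge hr'0 hr'1.le (by linarith)
    have h3 : r' ^ (s - 1) = Real.exp (Real.log r' * (s - 1)) := by
      rw [Real.rpow_def_of_pos hr'0]
    have h4 : Real.log r' * (s - 1) = c + -c * s := by rw [hc]; ring
    rw [h1]
    calc r' ^ ((N:ℝ)) ≤ r' ^ (s - 1) := h2
      _ = Real.exp c * Real.exp (-c * s) := by rw [h3, h4, Real.exp_add]
  calc ‖NormedSpace.exp (s • M) i j‖ ≤ ‖NormedSpace.exp (s • M)‖ :=
        norm_entry_le_linfty _ i j
    _ ≤ C₁ * r' ^ N * K₀ := hbound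
    _ ≤ C₁ * (Real.exp c * Real.exp (-c * s)) * K₀ := by
        have h6 : C₁ * r' ^ N ≤ C₁ * (Real.exp c * Real.exp (-c * s)) :=
          mul_le_mul_of_nonneg_left hrN hC₁pos.le
        exact mul_le_mul_of_nonneg_right h6 hK₀pos.le
    _ = C₁ * K₀ * Real.exp c * Real.exp (-c * s) := by ring
end Local3

section Local4
attribute [local instance] Matrix.linftyOpNormedRing Matrix.linftyOpNormedAlgebra
variable {n : ℕ}

lemma exp_map_ofReal (n : ℕ) (B : Matrix (Fin n) (Fin n) ℝ) :
    (NormedSpace.exp B).map (algebraMap ℝ ℂ) =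
      NormedSpace.exp (B.map (algebraMap ℝ ℂ)) := by
  have hf : Continuous fun X : Matrix (Fin n) (Fin n) ℝ =>
      ((algebraMap ℝ ℂ).mapMatrix : Matrix (Fin n) (Fin n) ℝ →+* Matrix (Fin n) (Fin n) ℂ) X := by
    simpa [RingHom.mapMatrix_apply] using
      (Continuous.matrix_map (continuous_id (X := Matrix (Fin n) (Fin n) ℝ))
        Complex.continuous_ofReal)
  have h1 := NormedSpace.map_exp
    ((algebraMap ℝ ℂ).mapMatrix : Matrix (Fin n) (Fin n) ℝ →+* Matrix (Fin n) (Fin n) ℂ) hf B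
  rw [RingHom.mapMatrix_apply] at h1
  exact h1
end Local4

section Local5
variable {n : ℕ}

lemma exp_decay_real (A : Matrix (Fin n) (Fin n) ℝ)
    (hspec : ∀ μ ∈ spectrum ℂ (A.map (algebraMap ℝ ℂ)), μ.re < 0) :
    ∃ c K : ℝ, 0 < c ∧ 0 < K ∧ ∀ s : ℝ, 0 ≤ s → ∀ i j : Fin n,
      |NormedSpace.exp (s • A) i j| ≤ K * Real.exp (-c * s) := by
  obtain ⟨c, K, hc, hK, hb⟩ := exp_decay_complex (A.map (algebraMap ℝ ℂ)) hspec
  refine ⟨c, K, hc, hK, ?_⟩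
  intro s hs i j
  have hsmulmap : (s • A).map (algebraMap ℝ ℂ) = s • A.map (algebraMap ℝ ℂ) := by
    ext i j
    simp [Matrix.map_apply, Complex.real_smul]
  have hmap := exp_map_ofReal n (s • A)
  rw [hsmulmap] at hmap
  have hentry : ((NormedSpace.exp (s • A) i j : ℝ) : ℂ) =
      NormedSpace.exp (s • A.map (algebraMap ℝ ℂ)) i j := by
    rw [← hmap]; rfl
  have := hb s hs i j
  rw [← hentry] at this
  simpa [Complex.norm_real, Real.norm_eq_abs] using this
end Local5

section Main
open MeasureTheory Filter Set Topology
attribute [local instance] Matrix.linftyOpNormedRing Matrix.linftyOpNormedAlgebra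
variable {N : ℕ}

instance : CompleteSpace (Matrix (Fin N) (Fin N) ℝ) := FiniteDimensional.complete ℝ _

instance : ContinuousENorm (Matrix (Fin N) (Fin N) ℝ) := SeminormedAddGroup.toContinuousENorm

instance : TopologicalSpace.PseudoMetrizableSpace (Matrix (Fin N) (Fin N) ℝ) :=
  inferInstanceAs (TopologicalSpace.PseudoMetrizableSpace (Fin N → Fin N → ℝ))

lemma linfty_norm_le_sum (M : Matrix (Fin N) (Fin N) ℝ) : ‖M‖ ≤ ∑ i, ∑ j, ‖M i j‖ := by
  have h : ‖M‖₊ ≤ ∑ i, ∑ j, ‖M i j‖₊ := by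
    rw [Matrix.linfty_opNNNorm_def]
    exact Finset.sup_le fun i _ =>
      Finset.single_le_sum (f := fun i => ∑ j, ‖M i j‖₊) (fun _ _ => zero_le)
        (Finset.mem_univ i)
  have := (NNReal.coe_le_coe).mpr h
  simpa [NNReal.coe_sum] using this

set_option maxHeartbeats 1600000 in
theorem main_aux (C : Set (Fin N → ℝ))
    (hclosed : IsClosed C)
    (hadd : ∀ x ∈ C, ∀ y ∈ C, x + y ∈ C)
    (hsmul : ∀ t : ℝ, 0 ≤ t → ∀ x ∈ C, t • x ∈ C)
    (A : Matrix (Fin N) (Fin N) ℝ)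
    (hquasi : ∀ s : ℝ, 0 ≤ s → ∀ x ∈ C, (NormedSpace.exp (s • A)).mulVec x ∈ C)
    (hspec : ∀ μ ∈ spectrum ℂ (A.map (algebraMap ℝ ℂ)), μ.re < 0) :
    IsUnit A.det ∧
    (∀ i j : Fin N, IntegrableOn (fun s : ℝ => NormedSpace.exp (s • A) i j) (Set.Ici 0)) ∧
    (∀ i j : Fin N, (-A⁻¹) i j = ∫ s in Set.Ici (0 : ℝ), NormedSpace.exp (s • A) i j) ∧
    (∀ x ∈ C, (-A⁻¹).mulVec x ∈ C) := by
  -- invertibility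
  have hdet : IsUnit A.det := by
    have h0 : (0 : ℂ) ∉ spectrum ℂ (A.map (algebraMap ℝ ℂ)) := by
      intro h
      simpa using hspec 0 h
    have hU : IsUnit (A.map (algebraMap ℝ ℂ)) := by
      by_contra hU
      exact h0 (spectrum.zero_mem_iff ℂ |>.mpr hU)
    have hUdet : IsUnit (A.map (algebraMap ℝ ℂ)).det := (Matrix.isUnit_iff_isUnit_det _).mp hU
    rw [← RingHom.mapMatrix_apply, ← RingHom.map_det] at hUdet
    have : (algebraMap ℝ ℂ) A.det ≠ 0 := hUdet.ne_zero
    have hne : A.det ≠ 0 := fun h => this (by rw [h, map_zero])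
    exact isUnit_iff_ne_zero.mpr hne
  -- setup
  set F : ℝ → Matrix (Fin N) (Fin N) ℝ := fun s => NormedSpace.exp (s • A) with hF
  have hFcont : Continuous F := by
    exact NormedSpace.exp_continuous.comp (continuous_id.smul continuous_const)
  obtain ⟨c, K, hc, hK, hb⟩ := exp_decay_real A hspec
  have hgint : IntegrableOn (fun s : ℝ => (N : ℝ)^2 * K * Real.exp (-c * s)) (Ici 0) := by
    rw [integrableOn_Ici_iff_integrableOn_Ioi]
    exact ((exp_neg_integrableOn_Ioi 0 hc).congr_fun
      (fun s _ => by rw [neg_mul]) measurableSet_Ioi).const_mul _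
  have hFnorm : ∀ s : ℝ, 0 ≤ s → ‖F s‖ ≤ (N : ℝ)^2 * K * Real.exp (-c * s) := by
    intro s hs
    calc ‖F s‖ ≤ ∑ i, ∑ j, ‖F s i j‖ := linfty_norm_le_sum _
      _ ≤ ∑ _i : Fin N, ∑ _j : Fin N, K * Real.exp (-c * s) := by
          apply Finset.sum_le_sum
          intro i _
          apply Finset.sum_le_sum
          intro j _
          simpa [Real.norm_eq_abs] using hb s hs i j
      _ = (N : ℝ)^2 * K * Real.exp (-c * s) := by
          simp [Finset.sum_const]
          ring
  have hFint : IntegrableOn F (Ici 0) := by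
    refine Integrable.mono' hgint hFcont.aestronglyMeasurable.restrict ?_
    rw [ae_restrict_iff' measurableSet_Ici]
    exact Eventually.of_forall fun s hs => hFnorm s hs
  -- entrywise integrability
  have hentint : ∀ i j : Fin N,
      IntegrableOn (fun s : ℝ => F s i j) (Ici 0) := by
    intro i j
    have hgint' : IntegrableOn (fun s : ℝ => K * Real.exp (-c * s)) (Ici 0) := by
      rw [integrableOn_Ici_iff_integrableOn_Ioi]
      exact ((exp_neg_integrableOn_Ioi 0 hc).congr_fun
        (fun s _ => by rw [neg_mul]) measurableSet_Ioi).const_mul _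
    refine Integrable.mono' hgint' (hFcont.matrix_elem i j).aestronglyMeasurable.restrict ?_
    rw [ae_restrict_iff' measurableSet_Ici]
    exact Eventually.of_forall fun s hs => by
      simpa [Real.norm_eq_abs] using hb s hs i j
  -- the matrix-valued integral
  set G : Matrix (Fin N) (Fin N) ℝ := ∫ s in Ici (0:ℝ), F s with hG
  -- A * G = -1
  have hFderiv : ∀ s : ℝ, HasDerivAt F (A * F s) s := fun s =>
    hasDerivAt_exp_smul_const' (𝕂 := ℝ) A s
  have hmulint : IntegrableOn (fun s => A * F s) (Ici 0) :=
    (ContinuousLinearMap.mul ℝ (Matrix (Fin N) (Fin N) ℝ) A).integrable_comp hFint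
  have hAG : A * G = -1 := by
    have hlim1 : Tendsto (fun T : ℝ => ∫ s in (0:ℝ)..T, A * F s) atTop
        (𝓝 (∫ s in Ioi (0:ℝ), A * F s)) :=
      intervalIntegral_tendsto_integral_Ioi 0
        ((integrableOn_Ici_iff_integrableOn_Ioi).mp hmulint) tendsto_id
    have heq : ∀ T : ℝ, ∫ s in (0:ℝ)..T, A * F s = F T - 1 := by
      intro T
      have := intervalIntegral.integral_eq_sub_of_hasDerivAt
        (f := F) (f' := fun s => A * F s)
        (fun x _ => hFderiv x)
        ((continuous_const.mul hFcont).intervalIntegrable 0 T)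
      rw [this, hF]
      simp [NormedSpace.exp_zero]
    have hlim2 : Tendsto (fun T : ℝ => F T - 1) atTop
        (𝓝 ((0 : Matrix (Fin N) (Fin N) ℝ) - 1)) := by
      apply Tendsto.sub_const
      apply squeeze_zero_norm' ((eventually_ge_atTop (0:ℝ)).mono fun T hT => hFnorm T hT)
      have h1 : Tendsto (fun T : ℝ => Real.exp (-(c * T))) atTop (𝓝 0) :=
        Real.tendsto_exp_neg_atTop_nhds_zero.comp
          (Tendsto.const_mul_atTop hc tendsto_id)
      have h2 : Tendsto (fun T : ℝ => (N:ℝ)^2 * K * Real.exp (-(c * T))) atTop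
          (𝓝 ((N:ℝ)^2 * K * 0)) := h1.const_mul _
      rw [mul_zero] at h2
      exact h2.congr fun T => by rw [neg_mul]
    have hlim1' : Tendsto (fun T : ℝ => ∫ s in (0:ℝ)..T, A * F s) atTop
        (𝓝 (A * G)) := by
      have : (∫ s in Ioi (0:ℝ), A * F s) = A * G := by
        rw [hG, ← MeasureTheory.integral_Ici_eq_integral_Ioi]
        have h := (ContinuousLinearMap.mul ℝ (Matrix (Fin N) (Fin N) ℝ) A).integral_comp_comm
          hFint
        simpa using h
      rwa [this] at hlim1
    have := tendsto_nhds_unique hlim1' ((hlim2.congr fun T => (heq T).symm))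
    rw [this, zero_sub]
  -- G = -A⁻¹
  have hGinv : G = -A⁻¹ := by
    have h1 : A⁻¹ * (A * G) = G := by
      rw [← mul_assoc, Matrix.nonsing_inv_mul A hdet, one_mul]
    rw [hAG] at h1
    rw [← h1]
    simp
  -- entrywise identity
  have hentry : ∀ i j : Fin N, G i j = ∫ s in Ici (0:ℝ), F s i j := by
    intro i j
    let e : Matrix (Fin N) (Fin N) ℝ →L[ℝ] ℝ :=
      LinearMap.toContinuousLinearMap
        { toFun := fun M => M i j
          map_add' := fun X Y => rfl
          map_smul' := fun c X => rfl }
    have h := e.integral_comp_comm hFint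
    exact h.symm
  -- cone invariance
  have hcone : ∀ x ∈ C, (-A⁻¹).mulVec x ∈ C := by
    intro x hx
    rw [← hGinv]
    let L : Matrix (Fin N) (Fin N) ℝ →L[ℝ] (Fin N → ℝ) :=
      LinearMap.toContinuousLinearMap
        { toFun := fun M => M.mulVec x
          map_add' := fun X Y => Matrix.add_mulVec X Y x
          map_smul' := fun c X => Matrix.smul_mulVec c X x }
    have hLG : G.mulVec x = ∫ s in Ici (0:ℝ), (F s).mulVec x := by
      have h := L.integral_comp_comm hFint
      exact h.symm
    by_contra hz
    have hconv : Convex ℝ C := by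
      intro p hp q hq a b ha hb hab
      exact hadd _ (hsmul a ha p hp) _ (hsmul b hb q hq)
    obtain ⟨f, u, hfb, hfz⟩ := geometric_hahn_banach_closed_point hconv hclosed hz
    have h0C : (0 : Fin N → ℝ) ∈ C := by simpa using hsmul 0 le_rfl x hx
    have hu0 : 0 < u := by simpa using hfb 0 h0C
    have hfC : ∀ y ∈ C, f y ≤ 0 := by
      intro y hy
      by_contra hfy
      push_neg at hfy
      have ht : 0 ≤ (|u| + 1) / f y := by positivity
      have h1 : f (((|u| + 1) / f y) • y) < u := hfb _ (hsmul _ ht y hy)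
      rw [_root_.map_smul, smul_eq_mul, div_mul_cancel₀ _ (ne_of_gt hfy)] at h1
      have h2 : u ≤ |u| := le_abs_self u
      linarith
    have hint3 : IntegrableOn (fun s => (F s).mulVec x) (Ici 0) := L.integrable_comp hFint
    have hfGz : f (G.mulVec x) ≤ 0 := by
      rw [hLG]
      have h := f.integral_comp_comm hint3
      rw [← h]
      refine integral_nonpos_of_ae ((ae_restrict_iff' measurableSet_Ici).mpr
        (Eventually.of_forall fun s hs => ?_))
      exact hfC _ (hquasi s hs x hx)
    linarith
  refine ⟨hdet, hentint, ?_, hcone⟩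
  intro i j
  rw [← hGinv]
  exact hentry i j

end Main


/-- Let `C ⊆ ℝ^N` be a closed convex cone and `A ∈ M_N(ℝ)` quasi-positive with respect to `C`
(i.e. `exp(sA)(C) ⊆ C` for all `s ≥ 0`) with all complex eigenvalues of negative real part.
Then `A` is invertible, `−A^{−1} = ∫_0^∞ exp(sA) ds` (entrywise), and `−A^{−1} ∈ π(C)`,
i.e. `−A^{−1}` maps `C` into `C`. -/
theorem neg_inv_of_quasiPositive_stable {N : ℕ} (C : Set (Fin N → ℝ))
    (hclosed : IsClosed C)
    (hadd : ∀ x ∈ C, ∀ y ∈ C, x + y ∈ C)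
    (hsmul : ∀ t : ℝ, 0 ≤ t → ∀ x ∈ C, t • x ∈ C)
    (A : Matrix (Fin N) (Fin N) ℝ)
    (hquasi : ∀ s : ℝ, 0 ≤ s → ∀ x ∈ C, (NormedSpace.exp (s • A)).mulVec x ∈ C)
    (hspec : ∀ μ ∈ spectrum ℂ (A.map (algebraMap ℝ ℂ)), μ.re < 0) :
    IsUnit A.det ∧
    (∀ i j : Fin N, IntegrableOn (fun s : ℝ => NormedSpace.exp (s • A) i j) (Set.Ici 0)) ∧
    (∀ i j : Fin N, (-A⁻¹) i j = ∫ s in Set.Ici (0 : ℝ), NormedSpace.exp (s • A) i j) ∧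
    (∀ x ∈ C, (-A⁻¹).mulVec x ∈ C) := by
  exact main_aux C hclosed hadd hsmul A hquasi hspec
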